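/- arXiv:2503.10162 — 2 statements merged into one kernel-verified Lean document; each statement's English description precedes it below -/
import Mathlib

section
/- For α ∈ ℂ with |α| ≤ 1 and k ≥ 1, the composition operator C_φ with φ(z) = α z^k is an isometry on H²_h(D) if and only if |α| = 1. -/
noncomputable section
open Complex Metric Filter Set MeasureTheory
open scoped Real ComplexConjugate ComplexInnerProductSpace

/-- The underlying `ℓ²` space of square-summable complex sequences. -/
abbrev ℓ2 : Type := lp (fun _ : ℕ => ℂ) 2

/-- The Hilbert space `H²ₕ(𝔻)` of complex-valued harmonic functions on the unit disc,
represented by the pair of coefficient sequences `(aₙ)ₙ` and `(conj bₙ)ₙ`,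
with the `L²` product norm. -/
abbrev Hh : Type := WithLp 2 (ℓ2 × ℓ2)

/-- The analytic-part Taylor coefficients `aₙ` of `f = h + conj g`. -/
def aCoef (f : Hh) : ℕ → ℂ := fun n => (WithLp.equiv 2 (ℓ2 × ℓ2) f).1 n

/-- The co-analytic-part Taylor coefficients `bₙ` of `f = h + conj g`. -/
def bCoef (f : Hh) : ℕ → ℂ := fun n => conj ((WithLp.equiv 2 (ℓ2 × ℓ2) f).2 n)

/-- The harmonic function on the disc determined by an element of `H²ₕ(𝔻)`:
`f(z) = Σ aₙ zⁿ + conj (Σ bₙ zⁿ)`. -/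
def toFun (f : Hh) (z : ℂ) : ℂ :=
  (∑' n : ℕ, aCoef f n * z ^ n) + conj (∑' n : ℕ, bCoef f n * z ^ n)

lemma memℓ2_pow {α : ℂ} (h : ‖α‖ < 1) : Memℓp (fun n : ℕ => α ^ n) 2 := by
  apply memℓp_gen
  have h2 : Summable (fun n : ℕ => (‖α‖ ^ 2) ^ n) :=
    summable_geometric_of_lt_one (by positivity) (by nlinarith [norm_nonneg α])
  refine h2.congr fun n => ?_
  rw [show ((2 : ENNReal)).toReal = ((2 : ℕ) : ℝ) by norm_num, Real.rpow_natCast, norm_pow,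
    ← pow_mul, ← pow_mul, Nat.mul_comm]

/-- The reproducing kernel `K_α(z) = 1/(1 - conj α · z) + 1/(1 - α · conj z)` of `H²ₕ(𝔻)`,
as an element of `Hh` (junk value `0` when `α` is outside the unit disc). -/
def kernel (α : ℂ) : Hh :=
  if h : ‖α‖ < 1 then
    (WithLp.equiv 2 (ℓ2 × ℓ2)).symm
      (⟨fun n => (conj α) ^ n, memℓ2_pow (by simpa using h)⟩,
       ⟨fun n => α ^ n, memℓ2_pow h⟩)
  else 0

/-- `F = C_φ f`, i.e. `F` is obtained from `f = h + conj g` by composing each part with `φ`: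
on the unit disc, the analytic part of `F` is `h ∘ φ` and the co-analytic part is `conj (g ∘ φ)`. -/
def Represents (φ : ℂ → ℂ) (f F : Hh) : Prop :=
  ∀ z ∈ ball (0 : ℂ) 1,
    ((∑' n : ℕ, aCoef F n * z ^ n) = ∑' n : ℕ, aCoef f n * (φ z) ^ n) ∧
    ((∑' n : ℕ, bCoef F n * z ^ n) = ∑' n : ℕ, bCoef f n * (φ z) ^ n)

/-- The Poisson kernel `P_r(x)` for the unit disc. -/
def poisson (r x : ℝ) : ℝ := (1 - r ^ 2) / (1 - 2 * r * Real.cos x + r ^ 2)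

/-- A real-valued function is harmonic on a set: it is `C²` there and its Laplacian vanishes. -/
def HarmonicOnDisc (u : ℂ → ℝ) (s : Set ℂ) : Prop :=
  ContDiffOn ℝ 2 u s ∧
    ∀ z ∈ s, iteratedFDeriv ℝ 2 u z ![1, 1] + iteratedFDeriv ℝ 2 u z ![Complex.I, Complex.I] = 0


/-! ### Auxiliary lemmas -/

lemma hasFPS_of_bound {c : ℕ → ℂ} {C : ℝ} (hC : ∀ n, ‖c n‖ ≤ C) :
    HasFPowerSeriesOnBall (fun z => ∑' n, c n * z ^ n)
      (FormalMultilinearSeries.ofScalars ℂ c) 0 1 := by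
  refine ⟨?_, one_pos, ?_⟩
  · apply FormalMultilinearSeries.le_radius_of_bound _ C (r := 1)
    intro n
    rw [FormalMultilinearSeries.ofScalars_norm]
    simpa using hC n
  · intro y hy
    have hy1 : ‖y‖ < 1 := by
      simpa [EMetric.mem_ball, ← ofReal_norm, ENNReal.ofReal_lt_one] using hy
    have hsum : Summable (fun n : ℕ => c n * y ^ n) := by
      apply Summable.of_norm
      refine Summable.of_nonneg_of_le (fun n => norm_nonneg _) (fun n => ?_)
        (Summable.mul_left C (summable_geometric_of_lt_one (norm_nonneg y) hy1))
      rw [norm_mul, norm_pow]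
      exact mul_le_mul_of_nonneg_right (hC n) (by positivity)
    rw [zero_add]
    simp only [FormalMultilinearSeries.ofScalars_apply_eq, smul_eq_mul]
    exact hsum.hasSum

lemma coeff_unique {c d : ℕ → ℂ} (hc : ∃ C, ∀ n, ‖c n‖ ≤ C) (hd : ∃ C, ∀ n, ‖d n‖ ≤ C)
    (h : ∀ z ∈ ball (0:ℂ) 1, (∑' n, c n * z ^ n) = ∑' n, d n * z ^ n) : c = d := by
  obtain ⟨C, hC⟩ := hc; obtain ⟨D, hD⟩ := hd
  have h1 := (hasFPS_of_bound hC).hasFPowerSeriesAt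
  have h2 := (hasFPS_of_bound hD).hasFPowerSeriesAt
  have heq : ∀ᶠ z in nhds (0:ℂ), (∑' n, c n * z ^ n) = ∑' n, d n * z ^ n :=
    Filter.eventually_of_mem (Metric.ball_mem_nhds _ one_pos) h
  exact FormalMultilinearSeries.ofScalars_series_injective ℂ ℂ
    (h1.eq_formalMultilinearSeries_of_eventually h2 heq)

/-- The coefficient sequence of the composition of `∑ xₙ wⁿ` with `w = β z^k`. -/
def seqComp (k : ℕ) (β : ℂ) (x : ℕ → ℂ) : ℕ → ℂ :=
  fun m => if k ∣ m then x (m / k) * β ^ (m / k) else 0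

lemma seqComp_mul {k : ℕ} (hk : k ≠ 0) (β : ℂ) (x : ℕ → ℂ) (n : ℕ) :
    seqComp k β x (k * n) = x n * β ^ n := by
  simp [seqComp, Dvd.intro_left n rfl, Nat.mul_div_cancel_left n (Nat.pos_of_ne_zero hk)]

lemma seqComp_eq_zero (k : ℕ) (β : ℂ) (x : ℕ → ℂ) {m : ℕ}
    (hm : m ∉ Set.range (fun n => k * n)) : seqComp k β x m = 0 := by
  rw [seqComp, if_neg]
  rintro ⟨n, rfl⟩
  exact hm ⟨n, rfl⟩

lemma tsum_seqComp {k : ℕ} (hk : k ≠ 0) (β : ℂ) (x : ℕ → ℂ) (z : ℂ) :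
    (∑' m, seqComp k β x m * z ^ m) = ∑' n, x n * (β * z ^ k) ^ n := by
  rw [← Function.Injective.tsum_eq (g := fun n => k * n) (mul_right_injective₀ hk)
    (f := fun m => seqComp k β x m * z ^ m)
    (Function.support_subset_iff'.mpr fun m hm => by rw [seqComp_eq_zero k β x hm, zero_mul])]
  refine tsum_congr fun n => ?_
  rw [seqComp_mul hk, mul_pow, ← pow_mul, mul_comm k n, pow_mul]
  ring

lemma tsum_norm_seqComp {k : ℕ} (hk : k ≠ 0) {β : ℂ} (hβ : ‖β‖ = 1) (x : ℕ → ℂ) :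
    (∑' m, ‖seqComp k β x m‖ ^ (2:ℝ)) = ∑' n, ‖x n‖ ^ (2:ℝ) := by
  rw [← Function.Injective.tsum_eq (g := fun n => k * n) (mul_right_injective₀ hk)
    (f := fun m => ‖seqComp k β x m‖ ^ (2:ℝ))
    (Function.support_subset_iff'.mpr fun m hm => by
      rw [seqComp_eq_zero k β x hm, norm_zero, Real.zero_rpow (by norm_num)])]
  refine tsum_congr fun n => ?_
  rw [seqComp_mul hk, norm_mul, norm_pow, hβ, one_pow, mul_one]

lemma summable_seqComp {k : ℕ} (hk : k ≠ 0) {β : ℂ} (hβ : ‖β‖ = 1) (x : ℕ → ℂ)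
    (hx : Summable fun n => ‖x n‖ ^ (2:ℝ)) :
    Summable fun m => ‖seqComp k β x m‖ ^ (2:ℝ) := by
  rw [← Function.Injective.summable_iff (g := fun n => k * n) (mul_right_injective₀ hk)
    (fun m hm => by rw [seqComp_eq_zero k β x hm, norm_zero, Real.zero_rpow (by norm_num)])]
  refine hx.congr fun n => ?_
  simp only [Function.comp_apply, seqComp_mul hk, norm_mul, norm_pow, hβ, one_pow, mul_one]

/-- For `|α| ≤ 1` and `k ≥ 1`, the composition operator `C_φ` with
`φ(z) = α z^k` is an isometry on `H²ₕ(𝔻)` if and only if `|α| = 1`. -/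
theorem stmt_6 (α : ℂ) (hα : ‖α‖ ≤ 1) (k : ℕ) (hk : 1 ≤ k) :
    (∀ f : Hh, ∃ F : Hh, Represents (fun z => α * z ^ k) f F ∧ ‖F‖ = ‖f‖) ↔ ‖α‖ = 1 := by
  have hk0 : k ≠ 0 := by omega
  have h2R : ((2 : ENNReal)).toReal = (2 : ℝ) := by norm_num
  have h2pos : (0:ℝ) < ((2 : ENNReal)).toReal := by norm_num
  constructor
  · -- isometry implies ‖α‖ = 1
    intro H
    set f : Hh := (WithLp.equiv 2 (ℓ2 × ℓ2)).symm (lp.single 2 1 (1:ℂ), 0) with hf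
    obtain ⟨F, hrep, hnorm⟩ := H f
    have haf : aCoef f = fun n => if n = 1 then (1:ℂ) else 0 := by
      funext n
      simp only [aCoef, hf, Equiv.apply_symm_apply]
      by_cases h : n = 1
      · subst h; simp [lp.single_apply_self]
      · rw [if_neg h]; exact lp.single_apply_ne 2 1 _ h
    have hbf : bCoef f = 0 := by
      funext n
      simp [bCoef, hf, Equiv.apply_symm_apply]
    -- identify the coefficients of F
    have hFa : aCoef F = fun m => if m = k then α else 0 := by
      apply coeff_unique
      · exact ⟨‖(WithLp.equiv 2 (ℓ2 × ℓ2) F).1‖,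
          fun n => lp.norm_apply_le_norm (by norm_num) _ n⟩
      · refine ⟨‖α‖, fun n => ?_⟩
        by_cases h : n = k <;> simp [h]
      · intro z hz
        rw [(hrep z hz).1, haf]
        rw [tsum_eq_single 1 (by intro b hb; simp [hb]),
          tsum_eq_single k (by intro b hb; simp [hb])]
        simp
    have hFb : bCoef F = fun _ => 0 := by
      apply coeff_unique
      · refine ⟨‖(WithLp.equiv 2 (ℓ2 × ℓ2) F).2‖, fun n => ?_⟩
        rw [bCoef, RCLike.norm_conj]
        exact lp.norm_apply_le_norm (by norm_num) _ n
      · exact ⟨0, fun n => by simp⟩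
      · intro z hz
        rw [(hrep z hz).2, hbf]
        simp
    -- compute the norms
    have hF1 : (WithLp.equiv 2 (ℓ2 × ℓ2) F).1 = lp.single 2 k α := by
      ext m
      have := congrFun hFa m
      simp only [aCoef] at this
      rw [this]
      by_cases h : m = k
      · subst h; simp [lp.single_apply_self]
      · rw [if_neg h]; exact (lp.single_apply_ne (E := fun _ : ℕ => ℂ) 2 k α h).symm
    have hF2 : (WithLp.equiv 2 (ℓ2 × ℓ2) F).2 = 0 := by
      ext m
      have := congrFun hFb m
      simp only [bCoef] at this
      simpa using congrArg conj this
    have hnF : ‖F‖ = ‖α‖ := by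
      rw [WithLp.prod_norm_eq_add h2pos]
      have e1 : F.fst = (WithLp.equiv 2 (ℓ2 × ℓ2) F).1 := rfl
      have e2 : F.snd = (WithLp.equiv 2 (ℓ2 × ℓ2) F).2 := rfl
      have hns : ‖(lp.single 2 k α : ℓ2)‖ = ‖α‖ := lp.norm_single (E := fun _ : ℕ => ℂ) (p := 2) (by norm_num) k α
      rw [e1, e2, hF1, hF2, norm_zero, hns]
      rw [h2R, Real.zero_rpow (by norm_num), add_zero, ← Real.rpow_mul (norm_nonneg α)]
      norm_num
    have hnf : ‖f‖ = 1 := by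
      rw [hf, WithLp.prod_norm_eq_add h2pos]
      have e1 : ((WithLp.equiv 2 (ℓ2 × ℓ2)).symm (lp.single 2 1 (1:ℂ), 0)).fst
          = lp.single 2 1 (1:ℂ) := rfl
      have e2 : ((WithLp.equiv 2 (ℓ2 × ℓ2)).symm (lp.single 2 1 (1:ℂ), 0)).snd = (0:ℓ2) := rfl
      have hns : ‖(lp.single 2 1 (1:ℂ) : ℓ2)‖ = ‖(1:ℂ)‖ := lp.norm_single (E := fun _ : ℕ => ℂ) (p := 2) (by norm_num) 1 (1:ℂ)
      rw [e1, e2, norm_zero, hns]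
      rw [h2R, Real.zero_rpow (by norm_num), add_zero]
      norm_num
    rw [hnF, hnf] at hnorm
    exact hnorm
  · -- ‖α‖ = 1 implies isometry
    intro hα1 f
    set x := (WithLp.equiv 2 (ℓ2 × ℓ2) f).1 with hx
    set y := (WithLp.equiv 2 (ℓ2 × ℓ2) f).2 with hy
    have hαc : ‖(conj α : ℂ)‖ = 1 := by rwa [RCLike.norm_conj]
    have hxs : Summable fun n => ‖x n‖ ^ (2:ℝ) := by
      have := (lp.memℓp x).summable h2pos
      rwa [h2R] at this
    have hys : Summable fun n => ‖y n‖ ^ (2:ℝ) := by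
      have := (lp.memℓp y).summable h2pos
      rwa [h2R] at this
    have hXm : Memℓp (seqComp k α x) 2 := by
      apply memℓp_gen
      rw [h2R]
      exact summable_seqComp hk0 hα1 _ hxs
    have hYm : Memℓp (seqComp k (conj α) y) 2 := by
      apply memℓp_gen
      rw [h2R]
      exact summable_seqComp hk0 hαc _ hys
    refine ⟨(WithLp.equiv 2 (ℓ2 × ℓ2)).symm (⟨seqComp k α x, hXm⟩, ⟨seqComp k (conj α) y, hYm⟩),
      ?_, ?_⟩
    · intro z hz
      constructor
      · have ha : aCoef ((WithLp.equiv 2 (ℓ2 × ℓ2)).symm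
            (⟨seqComp k α x, hXm⟩, ⟨seqComp k (conj α) y, hYm⟩)) = seqComp k α x := by
          funext m; simp only [aCoef, Equiv.apply_symm_apply]
        rw [ha, tsum_seqComp hk0]
        rfl
      · have hb : bCoef ((WithLp.equiv 2 (ℓ2 × ℓ2)).symm
            (⟨seqComp k α x, hXm⟩, ⟨seqComp k (conj α) y, hYm⟩))
            = seqComp k α (fun n => conj (y n)) := by
          funext m
          simp only [bCoef, Equiv.apply_symm_apply]
          show conj (seqComp k (conj α) y m) = _
          rw [seqComp, seqComp]
          split
          · rw [map_mul, map_pow, Complex.conj_conj]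
          · exact map_zero conj
        rw [hb, tsum_seqComp hk0]
        rfl
    · rw [WithLp.prod_norm_eq_add h2pos, WithLp.prod_norm_eq_add h2pos (f := f)]
      have e1 : ((WithLp.equiv 2 (ℓ2 × ℓ2)).symm
          (⟨seqComp k α x, hXm⟩, ⟨seqComp k (conj α) y, hYm⟩)).fst
          = (⟨seqComp k α x, hXm⟩ : ℓ2) := rfl
      have e2 : ((WithLp.equiv 2 (ℓ2 × ℓ2)).symm
          (⟨seqComp k α x, hXm⟩, ⟨seqComp k (conj α) y, hYm⟩)).snd
          = (⟨seqComp k (conj α) y, hYm⟩ : ℓ2) := rfl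
      have ef1 : f.fst = x := rfl
      have ef2 : f.snd = y := rfl
      rw [e1, e2, ef1, ef2]
      have n1 : ‖(⟨seqComp k α x, hXm⟩ : ℓ2)‖ = ‖x‖ := by
        rw [lp.norm_eq_tsum_rpow h2pos, lp.norm_eq_tsum_rpow h2pos, h2R]
        congr 1
        exact tsum_norm_seqComp hk0 hα1 x
      have n2 : ‖(⟨seqComp k (conj α) y, hYm⟩ : ℓ2)‖ = ‖y‖ := by
        rw [lp.norm_eq_tsum_rpow h2pos, lp.norm_eq_tsum_rpow h2pos, h2R]
        congr 1
        exact tsum_norm_seqComp hk0 hαc y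
      rw [n1, n2]
end
end

section
/- If φ is an analytic self-map of the unit disc with φ(0) = 0, then the composition operator C_φ on H²_h(D) satisfies 1 ≤ ‖C_φ‖ ≤ 4. -/
noncomputable section
open Complex Metric Filter Set MeasureTheory
open scoped Real ComplexConjugate ComplexInnerProductSpace

open intervalIntegral
open scoped Topology

namespace Stmt14


/-- Cauchy–Schwarz for tsums of nonneg sequences. -/
lemma tsum_mul_le_sqrt {f g : ℕ → ℝ} (hf : ∀ n, 0 ≤ f n) (hg : ∀ n, 0 ≤ g n)
    (hf2 : Summable fun n => f n ^ 2) (hg2 : Summable fun n => g n ^ 2) :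
    Summable (fun n => f n * g n) ∧
      ∑' n, f n * g n ≤ Real.sqrt (∑' n, f n ^ 2) * Real.sqrt (∑' n, g n ^ 2) := by
  have hA : 0 ≤ ∑' n, f n ^ 2 := tsum_nonneg fun n => sq_nonneg _
  have hB : 0 ≤ ∑' n, g n ^ 2 := tsum_nonneg fun n => sq_nonneg _
  have key : ∀ s : Finset ℕ, ∑ n ∈ s, f n * g n ≤
      Real.sqrt (∑' n, f n ^ 2) * Real.sqrt (∑' n, g n ^ 2) := by
    intro s
    have h1 : (∑ n ∈ s, f n * g n) ^ 2 ≤ (∑ n ∈ s, f n ^ 2) * ∑ n ∈ s, g n ^ 2 :=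
      Finset.sum_mul_sq_le_sq_mul_sq s f g
    have h2 : (∑ n ∈ s, f n ^ 2) ≤ ∑' n, f n ^ 2 :=
      Summable.sum_le_tsum s (fun n _ => sq_nonneg _) hf2
    have h3 : (∑ n ∈ s, g n ^ 2) ≤ ∑' n, g n ^ 2 :=
      Summable.sum_le_tsum s (fun n _ => sq_nonneg _) hg2
    have h4 : (∑ n ∈ s, f n * g n) ^ 2 ≤ (∑' n, f n ^ 2) * ∑' n, g n ^ 2 := by
      calc (∑ n ∈ s, f n * g n) ^ 2 ≤ (∑ n ∈ s, f n ^ 2) * ∑ n ∈ s, g n ^ 2 := h1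
        _ ≤ (∑' n, f n ^ 2) * ∑' n, g n ^ 2 := by
            apply mul_le_mul h2 h3 (Finset.sum_nonneg fun n _ => sq_nonneg _) hA
    have h5 : 0 ≤ ∑ n ∈ s, f n * g n :=
      Finset.sum_nonneg fun n _ => mul_nonneg (hf n) (hg n)
    calc ∑ n ∈ s, f n * g n = Real.sqrt ((∑ n ∈ s, f n * g n) ^ 2) := by
          rw [Real.sqrt_sq h5]
      _ ≤ Real.sqrt ((∑' n, f n ^ 2) * ∑' n, g n ^ 2) := Real.sqrt_le_sqrt h4
      _ = _ := Real.sqrt_mul hA _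
  have hsum : Summable fun n => f n * g n :=
    summable_of_sum_le (fun n => mul_nonneg (hf n) (hg n)) key
  exact ⟨hsum, Summable.tsum_le_of_sum_le hsum key⟩

lemma summable_norm_mul_pow {c : ℕ → ℂ} (hc : Summable fun n => ‖c n‖ ^ 2)
    {r : ℝ} (h0 : 0 ≤ r) (h1 : r < 1) : Summable fun n => ‖c n‖ * r ^ n := by
  have hg2 : Summable fun n : ℕ => (r ^ n) ^ 2 := by
    refine (summable_geometric_of_lt_one (r := r ^ 2) (by positivity) (by nlinarith)).congr
      fun n => ?_
    rw [← pow_mul, ← pow_mul, mul_comm]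
  exact (tsum_mul_le_sqrt (fun n => norm_nonneg _) (fun n => pow_nonneg h0 n) hc hg2).1

lemma tsum_norm_mul_pow_le {c : ℕ → ℂ} (hc : Summable fun n => ‖c n‖ ^ 2)
    {r : ℝ} (h0 : 0 ≤ r) (h1 : r < 1) :
    ∑' n, ‖c n‖ * r ^ n ≤ Real.sqrt (∑' n, ‖c n‖ ^ 2) * Real.sqrt (1 - r ^ 2)⁻¹ := by
  have hg2 : Summable fun n : ℕ => (r ^ n) ^ 2 := by
    refine (summable_geometric_of_lt_one (r := r ^ 2) (by positivity) (by nlinarith)).congr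
      fun n => ?_
    rw [← pow_mul, ← pow_mul, mul_comm]
  have := (tsum_mul_le_sqrt (fun n => norm_nonneg _) (fun n => pow_nonneg h0 n) hc hg2).2
  refine this.trans ?_
  have heq : ∑' n : ℕ, (r ^ n) ^ 2 = (1 - r ^ 2)⁻¹ := by
    rw [show (fun n : ℕ => (r ^ n) ^ 2) = fun n : ℕ => (r ^ 2) ^ n by
      funext n; rw [← pow_mul, ← pow_mul, mul_comm]]
    rw [tsum_geometric_of_lt_one (by positivity) (by nlinarith)]
  rw [heq]

lemma summable_term {c : ℕ → ℂ} (hc : Summable fun n => ‖c n‖ ^ 2)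
    {z : ℂ} (hz : ‖z‖ < 1) : Summable fun n => c n * z ^ n := by
  apply Summable.of_norm
  have := summable_norm_mul_pow hc (norm_nonneg z) hz
  refine this.congr fun n => ?_
  rw [norm_mul, norm_pow]



-- assume from p1:
variable {c : ℕ → ℂ}

lemma one_le_radius (hc : Summable fun n => ‖c n‖ ^ 2) :
    1 ≤ (FormalMultilinearSeries.ofScalars ℂ c).radius := by
  refine ENNReal.le_of_forall_nnreal_lt fun r hr => ?_
  apply FormalMultilinearSeries.le_radius_of_summable_norm
  have hr1 : (r : ℝ) < 1 := by exact_mod_cast hr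
  have := summable_norm_mul_pow hc r.coe_nonneg hr1
  refine this.congr fun n => ?_
  rw [FormalMultilinearSeries.ofScalars_norm]

lemma sum_eq : (FormalMultilinearSeries.ofScalars ℂ c).sum = fun z => ∑' n, c n * z ^ n := by
  funext z
  rw [FormalMultilinearSeries.sum]
  exact tsum_congr fun n => by
    rw [FormalMultilinearSeries.ofScalars_apply_eq, smul_eq_mul]

lemma analyticOnNhd (hc : Summable fun n => ‖c n‖ ^ 2) :
    AnalyticOnNhd ℂ (fun z => ∑' n, c n * z ^ n) (ball (0 : ℂ) 1) := by
  have hrad : (0 : ENNReal) < (FormalMultilinearSeries.ofScalars ℂ c).radius :=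
    lt_of_lt_of_le (by norm_num) (one_le_radius hc)
  have h := (FormalMultilinearSeries.ofScalars ℂ c).hasFPowerSeriesOnBall hrad
  rw [sum_eq] at h
  intro z hz
  refine (h.analyticOnNhd) z ?_
  rw [EMetric.mem_ball, edist_zero_right]
  calc ‖z‖₊ < (1 : ENNReal) := by
        rw [mem_ball, dist_zero_right] at hz
        exact_mod_cast hz
    _ ≤ _ := one_le_radius hc

lemma continuousOn_psum (hc : Summable fun n => ‖c n‖ ^ 2) :
    ContinuousOn (fun z => ∑' n, c n * z ^ n) (ball (0 : ℂ) 1) :=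
  (analyticOnNhd hc).continuousOn

lemma differentiableOn_psum (hc : Summable fun n => ‖c n‖ ^ 2) :
    DifferentiableOn ℂ (fun z => ∑' n, c n * z ^ n) (ball (0 : ℂ) 1) :=
  (analyticOnNhd hc).differentiableOn



/-- Mean value property over the circle of radius `r`. -/
lemma circle_average (u : ℂ → ℂ) (hu : DifferentiableOn ℂ u (ball (0 : ℂ) 1))
    {r : ℝ} (h0 : 0 < r) (h1 : r < 1) :
    ∫ θ in (0:ℝ)..(2 * π), u (circleMap 0 r θ) = 2 * π * u 0 := by
  have hsub : closedBall (0 : ℂ) r ⊆ ball 0 1 := closedBall_subset_ball h1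
  have hd : DiffContOnCl ℂ u (ball (0 : ℂ) r) := by
    constructor
    · exact hu.mono (ball_subset_ball h1.le)
    · rw [closure_ball (0 : ℂ) h0.ne']
      exact hu.continuousOn.mono hsub
  have hmem : (0 : ℂ) ∈ ball (0 : ℂ) r := mem_ball_self h0
  have key := hd.circleIntegral_sub_inv_smul hmem
  rw [circleIntegral] at key
  simp only [deriv_circleMap, sub_zero, smul_eq_mul] at key
  have heq : ∀ θ : ℝ, circleMap 0 r θ * I * ((circleMap 0 r θ)⁻¹ * u (circleMap 0 r θ))
      = I * u (circleMap 0 r θ) := by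
    intro θ
    have hne : circleMap 0 r θ ≠ 0 := circleMap_ne_center h0.ne'
    field_simp
  rw [intervalIntegral.integral_congr (fun θ _ => heq θ)] at key
  rw [intervalIntegral.integral_const_mul] at key
  have hI : (I : ℂ) ≠ 0 := I_ne_zero
  have : (2 * ↑π * I : ℂ) * u 0 = I * (2 * ↑π * u 0) := by ring
  rw [this] at key
  exact mul_left_cancel₀ hI key


section parseval
variable {c : ℕ → ℂ} {r : ℝ}

private def G (c : ℕ → ℂ) (r : ℝ) (p : ℕ × ℕ) (θ : ℝ) : ℂ :=
  c p.1 * conj (c p.2) * (circleMap 0 r θ) ^ p.1 * (conj (circleMap 0 r θ)) ^ p.2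

private def bnd (c : ℕ → ℂ) (r : ℝ) (p : ℕ × ℕ) : ℝ :=
  (‖c p.1‖ * r ^ p.1) * (‖c p.2‖ * r ^ p.2)

lemma norm_circleMap (h0 : 0 ≤ r) (θ : ℝ) : ‖circleMap 0 r θ‖ = r := by
  rw [norm_circleMap_zero, _root_.abs_of_nonneg h0]

lemma norm_G (h0 : 0 ≤ r) (p : ℕ × ℕ) (θ : ℝ) : ‖G c r p θ‖ = bnd c r p := by
  simp only [G, bnd, norm_mul, norm_pow, RCLike.norm_conj, norm_circleMap h0]
  ring

lemma bnd_summable (hc : Summable fun n => ‖c n‖ ^ 2) (h0 : 0 ≤ r) (h1 : r < 1) :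
    Summable (bnd c r) := by
  have h := summable_norm_mul_pow hc h0 h1
  exact h.mul_of_nonneg h
    (fun n => mul_nonneg (norm_nonneg _) (pow_nonneg h0 n))
    (fun n => mul_nonneg (norm_nonneg _) (pow_nonneg h0 n))

lemma bnd_nonneg (h0 : 0 ≤ r) (p : ℕ × ℕ) : 0 ≤ bnd c r p := by
  unfold bnd
  positivity

lemma G_summable (hc : Summable fun n => ‖c n‖ ^ 2) (h0 : 0 ≤ r) (h1 : r < 1) (θ : ℝ) :
    Summable (fun p => G c r p θ) := by
  apply Summable.of_norm
  exact (bnd_summable hc h0 h1).congr fun p => (norm_G h0 p θ).symm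

lemma G_continuous (p : ℕ × ℕ) : Continuous (fun θ => G c r p θ) := by
  unfold G
  have h1 : Continuous fun θ : ℝ => circleMap 0 r θ := continuous_circleMap 0 r
  have h2 : Continuous fun θ : ℝ => conj (circleMap 0 r θ) :=
    Complex.continuous_conj.comp h1
  continuity

/-- The double series sums to `x * conj x`. -/
lemma tsum_G (hc : Summable fun n => ‖c n‖ ^ 2) (h0 : 0 ≤ r) (h1 : r < 1) (θ : ℝ) :
    ∑' p : ℕ × ℕ, G c r p θ =
      (∑' n, c n * (circleMap 0 r θ) ^ n) * conj (∑' n, c n * (circleMap 0 r θ) ^ n) := by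
  set z := circleMap 0 r θ with hz
  have hzn : ‖z‖ < 1 := by rw [norm_circleMap h0]; exact h1
  have hx : Summable fun n => c n * z ^ n := summable_term hc hzn
  have hconj : conj (∑' n, c n * z ^ n) = ∑' n, conj (c n) * (conj z) ^ n := by
    rw [← tsum_congr (fun n => by rw [map_mul, map_pow] : ∀ n, conj (c n * z ^ n)
      = conj (c n) * (conj z) ^ n)]
    exact (hx.hasSum.map (starRingEnd ℂ).toAddMonoidHom Complex.continuous_conj).tsum_eq.symm
  rw [hconj]
  rw [Summable.tsum_prod' (((bnd_summable hc h0 h1).congr fun p => (norm_G h0 p θ).symm).of_norm)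
    (fun n => ?_)]
  · rw [← tsum_mul_right]
    apply tsum_congr fun n => ?_
    rw [← tsum_mul_left]
    apply tsum_congr fun m => ?_
    unfold G
    ring
  · apply Summable.of_norm
    have h := summable_norm_mul_pow hc h0 h1
    apply Summable.congr (h.mul_left ((‖c n‖ * r ^ n)))
    intro m
    rw [(norm_G h0 (n, m) θ)]
    unfold bnd
    ring

lemma circleMap_pow_conj_pow (h0 : 0 ≤ r) (n m : ℕ) (θ : ℝ) :
    (circleMap 0 r θ) ^ n * (conj (circleMap 0 r θ)) ^ m
      = (r : ℂ) ^ (n + m) * Complex.exp ((((n : ℝ) - (m : ℝ)) * I) * θ) := by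
  have hcm : circleMap 0 r θ = (r : ℂ) * Complex.exp (θ * I) := by
    simp [circleMap]
  have hconj : conj (circleMap 0 r θ) = (r : ℂ) * Complex.exp (-(θ * I)) := by
    rw [hcm, map_mul, Complex.conj_ofReal, ← Complex.exp_conj]
    congr 1
    simp [map_mul, Complex.conj_ofReal]
  rw [hconj, hcm, mul_pow, mul_pow, ← Complex.exp_nat_mul, ← Complex.exp_nat_mul,
    pow_add, mul_mul_mul_comm, ← Complex.exp_add]
  congr 1
  push_cast
  ring

lemma integral_G (h0 : 0 ≤ r) (n m : ℕ) :
    ∫ θ in (0:ℝ)..(2 * π), G c r (n, m) θ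
      = if m = n then c n * conj (c m) * (r : ℂ) ^ (n + m) * (2 * π) else 0 := by
  have key : ∀ θ : ℝ, G c r (n, m) θ
      = c n * conj (c m) * ((r : ℂ) ^ (n + m) * Complex.exp ((((n : ℝ) - (m : ℝ)) * I) * ↑θ)) := by
    intro θ
    unfold G
    rw [mul_assoc, circleMap_pow_conj_pow h0]
  rw [intervalIntegral.integral_congr (fun θ _ => key θ)]
  rw [intervalIntegral.integral_const_mul, intervalIntegral.integral_const_mul]
  by_cases hmn : m = n
  · subst hmn
    rw [if_pos rfl]
    have hone : ∀ θ : ℝ, Complex.exp ((((m : ℝ) - (m : ℝ)) * I) * ↑θ) = (1 : ℂ) := by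
      intro θ; simp
    rw [intervalIntegral.integral_congr (fun θ _ => hone θ), intervalIntegral.integral_const]
    simp only [sub_zero, smul_eq_mul, mul_one, Complex.real_smul]
    push_cast
    ring
  · rw [if_neg hmn]
    have hne : (((n : ℝ) - (m : ℝ)) * I : ℂ) ≠ 0 := by
      simp only [mul_ne_zero_iff, Ne, Complex.I_ne_zero, not_false_iff, and_true]
      intro h
      have h2 : ((n : ℝ) : ℂ) = ((m : ℝ) : ℂ) := sub_eq_zero.mp h
      exact hmn (by exact_mod_cast h2.symm)
    rw [integral_exp_mul_complex hne]
    have h2 : Complex.exp ((((n : ℝ) - (m : ℝ)) * I) * ((2 * π : ℝ) : ℂ))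
        = Complex.exp (((((n : ℤ) - (m : ℤ)) : ℤ) : ℂ) * (2 * ↑π * I)) := by
      congr 1
      push_cast
      ring
    rw [h2, Complex.exp_int_mul_two_pi_mul_I]
    simp

/-- Parseval for power series on the circle of radius `r`. -/
lemma integral_norm_sq (hc : Summable fun n => ‖c n‖ ^ 2) (h0 : 0 ≤ r) (h1 : r < 1) :
    ∫ θ in (0:ℝ)..(2 * π), ‖∑' n, c n * (circleMap 0 r θ) ^ n‖ ^ 2
      = 2 * π * ∑' n, ‖c n‖ ^ 2 * r ^ (2 * n) := by
  have h2π : (0:ℝ) ≤ 2 * π := by positivity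
  -- complexified integrand
  have hpoint : ∀ θ : ℝ, ((‖∑' n, c n * (circleMap 0 r θ) ^ n‖ ^ 2 : ℝ) : ℂ)
      = ∑' p : ℕ × ℕ, G c r p θ := by
    intro θ
    rw [tsum_G hc h0 h1 θ]
    rw [Complex.mul_conj]
    rw [Complex.normSq_eq_norm_sq]
  -- swap integral and tsum
  have hmeas : ∀ p : ℕ × ℕ, AEStronglyMeasurable (fun θ => G c r p θ)
      (volume.restrict (Ioc (0:ℝ) (2 * π))) :=
    fun p => (G_continuous p).aestronglyMeasurable
  have hlint : ∑' p : ℕ × ℕ, ∫⁻ θ in Ioc (0:ℝ) (2 * π), ‖G c r p θ‖₊ ≠ ⊤ := by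
    have heq : ∀ p : ℕ × ℕ, ∫⁻ θ in Ioc (0:ℝ) (2 * π), (‖G c r p θ‖₊ : ENNReal)
        = ENNReal.ofReal (bnd c r p * (2 * π)) := by
      intro p
      have : ∀ θ : ℝ, (‖G c r p θ‖₊ : ENNReal) = ENNReal.ofReal (bnd c r p) := by
        intro θ
        rw [← norm_G h0 p θ]; exact (ofReal_norm (G c r p θ)).symm
      rw [MeasureTheory.lintegral_congr this, MeasureTheory.lintegral_const,
        Measure.restrict_apply_univ, Real.volume_Ioc, ENNReal.ofReal_mul
          (bnd_nonneg h0 p)]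
      congr 1
      rw [sub_zero]
    rw [tsum_congr heq]
    rw [← ENNReal.ofReal_tsum_of_nonneg (fun p => mul_nonneg (bnd_nonneg h0 p) h2π)
      (((bnd_summable hc h0 h1)).mul_right _)]
    exact ENNReal.ofReal_ne_top
  have hswap : ∫ θ in (0:ℝ)..(2 * π), (∑' p : ℕ × ℕ, G c r p θ)
      = ∑' p : ℕ × ℕ, ∫ θ in (0:ℝ)..(2 * π), G c r p θ := by
    rw [intervalIntegral.integral_of_le h2π]
    rw [MeasureTheory.integral_tsum hmeas hlint]
    exact tsum_congr fun p => (intervalIntegral.integral_of_le h2π).symm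
  -- compute the RHS
  have hval : ∀ p : ℕ × ℕ, ∫ θ in (0:ℝ)..(2 * π), G c r p θ
      = if p.2 = p.1 then c p.1 * conj (c p.2) * (r : ℂ) ^ (p.1 + p.2) * (2 * π) else 0 :=
    fun p => integral_G h0 p.1 p.2
  have hsummable : Summable fun p : ℕ × ℕ => ∫ θ in (0:ℝ)..(2 * π), G c r p θ := by
    apply Summable.of_norm_bounded (g := fun p => bnd c r p * (2 * π))
      ((bnd_summable hc h0 h1).mul_right _)
    intro p
    have := intervalIntegral.norm_integral_le_of_norm_le_const
      (C := bnd c r p) (f := fun θ => G c r p θ) (a := 0) (b := 2 * π)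
      (fun θ _ => le_of_eq (norm_G h0 p θ))
    calc ‖∫ θ in (0:ℝ)..(2 * π), G c r p θ‖ ≤ bnd c r p * |2 * π - 0| := this
      _ = bnd c r p * (2 * π) := by rw [sub_zero, _root_.abs_of_nonneg h2π]
  have hdiag : ∑' p : ℕ × ℕ, ∫ θ in (0:ℝ)..(2 * π), G c r p θ
      = ∑' n : ℕ, ((‖c n‖ ^ 2 * r ^ (2 * n) * (2 * π) : ℝ) : ℂ) := by
    rw [Summable.tsum_prod' hsummable (fun n => ?_)]
    · apply tsum_congr fun n => ?_
      have e1 : ∀ m : ℕ, (∫ θ in (0:ℝ)..(2 * π), G c r (n, m) θ)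
          = if m = n then c n * conj (c n) * (r : ℂ) ^ (n + n) * (2 * ↑π) else 0 := by
        intro m
        rw [integral_G h0 n m]
        split_ifs with h
        · subst h; rfl
        · rfl
      rw [tsum_congr e1, tsum_ite_eq]
      rw [Complex.mul_conj, Complex.normSq_eq_norm_sq]
      push_cast
      ring
    · apply Summable.of_norm_bounded (g := fun m => bnd c r (n, m) * (2 * π))
        (((bnd_summable hc h0 h1).prod_factor n).mul_right _)
      intro m
      have := intervalIntegral.norm_integral_le_of_norm_le_const
        (C := bnd c r (n, m)) (f := fun θ => G c r (n, m) θ) (a := 0) (b := 2 * π)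
        (fun θ _ => le_of_eq (norm_G h0 (n, m) θ))
      calc ‖∫ θ in (0:ℝ)..(2 * π), G c r (n, m) θ‖ ≤ bnd c r (n, m) * |2 * π - 0| := this
        _ = bnd c r (n, m) * (2 * π) := by rw [sub_zero, _root_.abs_of_nonneg h2π]
  -- put it together
  have hsum2 : Summable fun n : ℕ => ‖c n‖ ^ 2 * r ^ (2 * n) * (2 * π) := by
    apply Summable.mul_right
    apply Summable.of_nonneg_of_le (fun n => by positivity) (fun n => ?_) hc
    calc ‖c n‖ ^ 2 * r ^ (2 * n) ≤ ‖c n‖ ^ 2 * 1 := by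
          apply mul_le_mul_of_nonneg_left _ (by positivity)
          exact pow_le_one₀ h0 h1.le
      _ = ‖c n‖ ^ 2 := mul_one _
  have hfinal : ((∫ θ in (0:ℝ)..(2 * π), ‖∑' n, c n * (circleMap 0 r θ) ^ n‖ ^ 2 : ℝ) : ℂ)
      = ((2 * π * ∑' n, ‖c n‖ ^ 2 * r ^ (2 * n) : ℝ) : ℂ) := by
    rw [← intervalIntegral.integral_ofReal]
    rw [intervalIntegral.integral_congr (fun θ _ => hpoint θ), hswap, hdiag]
    rw [← Complex.ofReal_tsum]
    rw [tsum_mul_right]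
    push_cast
    ring
  exact_mod_cast hfinal

end parseval


lemma norm_add_sq_complex (p q : ℂ) :
    ‖p + q‖ ^ 2 = ‖p‖ ^ 2 + 2 * (conj p * q).re + ‖q‖ ^ 2 := by
  have h1 : ∀ z : ℂ, ‖z‖ ^ 2 = Complex.normSq z := fun z => by
    rw [Complex.sq_norm]
  rw [h1, h1, h1, Complex.normSq_add]
  have h3 : (p * conj q).re = (conj p * q).re := by
    have h2 : conj p * q = conj (p * conj q) := by
      simp [map_mul]
    rw [h2, Complex.conj_re]
  rw [h3]
  ring

section sub
variable {φ : ℂ → ℂ} {a : ℕ → ℂ} {r : ℝ}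

/-- Tail analytic function. -/
private def hfun (a : ℕ → ℂ) (N : ℕ) (z : ℂ) : ℂ := ∑' n, a (n + N) * z ^ n

private def II (φ : ℂ → ℂ) (a : ℕ → ℂ) (r : ℝ) (N : ℕ) : ℝ :=
  ∫ θ in (0:ℝ)..(2 * π), ‖hfun a N (φ (circleMap 0 r θ))‖ ^ 2

variable (hφ : DifferentiableOn ℂ φ (ball (0:ℂ) 1))
  (hmap : MapsTo φ (ball (0:ℂ) 1) (ball (0:ℂ) 1)) (hzero : φ 0 = 0)
  (ha : Summable fun n => ‖a n‖ ^ 2) (h0 : 0 < r) (h1 : r < 1)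

include ha in
lemma ha_tail (N : ℕ) : Summable (fun n => ‖a (n + N)‖ ^ 2) :=
  (summable_nat_add_iff (f := fun n => ‖a n‖ ^ 2) N).2 ha

lemma hcirc (h0 : 0 < r) (h1 : r < 1) (θ : ℝ) : circleMap 0 r θ ∈ ball (0:ℂ) 1 := by
  rw [mem_ball, dist_zero_right, norm_circleMap_zero,
    _root_.abs_of_nonneg h0.le]
  exact h1

include hφ hmap h0 h1 in
lemma hφcont : Continuous fun θ : ℝ => φ (circleMap 0 r θ) :=
  hφ.continuousOn.comp_continuous (continuous_circleMap 0 r) (hcirc h0 h1)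

include hmap h0 h1 in
lemma hφmem (θ : ℝ) : φ (circleMap 0 r θ) ∈ ball (0:ℂ) 1 := hmap (hcirc h0 h1 θ)

include ha in
lemma hsplit (N : ℕ) {z : ℂ} (hz : ‖z‖ < 1) :
    hfun a N z = a N + z * hfun a (N + 1) z := by
  have hs : Summable fun n => a (n + N) * z ^ n :=
    summable_term (ha_tail ha N) hz
  unfold hfun
  rw [Summable.tsum_eq_zero_add hs]
  simp only [zero_add, pow_zero, mul_one]
  congr 1
  rw [← tsum_mul_left]
  apply tsum_congr fun n => ?_
  have : n + 1 + N = n + (N + 1) := by omega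
  rw [this]
  ring

include hφ hmap ha h0 h1 in
lemma contH (N : ℕ) : Continuous fun θ : ℝ => hfun a N (φ (circleMap 0 r θ)) := by
  exact (continuousOn_psum (ha_tail ha N)).comp_continuous
    (hφcont hφ hmap h0 h1) (hφmem hmap h0 h1)

include hφ hmap hzero ha h0 h1 in
lemma meanzero (N : ℕ) :
    ∫ θ in (0:ℝ)..(2 * π), (φ (circleMap 0 r θ) * hfun a N (φ (circleMap 0 r θ))) = 0 := by
  have hu : DifferentiableOn ℂ (fun z => φ z * hfun a N (φ z)) (ball (0:ℂ) 1) := by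
    apply hφ.mul
    exact (differentiableOn_psum (ha_tail ha N)).comp hφ hmap
  have := circle_average _ hu h0 h1
  rw [this, hzero]
  simp [hfun]

include hφ hmap hzero ha h0 h1 in
lemma step (N : ℕ) : II φ a r N ≤ 2 * π * ‖a N‖ ^ 2 + II φ a r (N + 1) := by
  set e : ℝ → ℂ := fun θ => φ (circleMap 0 r θ) with he
  have hmem : ∀ θ, ‖e θ‖ < 1 := fun θ => by
    have := hφmem hmap h0 h1 θ
    rwa [mem_ball, dist_zero_right] at this
  have hc1 : Continuous e := hφcont hφ hmap h0 h1
  have hc2 : Continuous fun θ => hfun a (N+1) (e θ) := contH hφ hmap ha h0 h1 (N+1)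
  have hc3 : Continuous fun θ => e θ * hfun a (N+1) (e θ) := hc1.mul hc2
  have hpt : ∀ θ : ℝ, ‖hfun a N (e θ)‖ ^ 2
      = ‖a N‖ ^ 2 + (2 * (conj (a N) * (e θ * hfun a (N+1) (e θ))).re
        + ‖e θ * hfun a (N+1) (e θ)‖ ^ 2) := fun θ => by
    rw [hsplit ha N (hmem θ), norm_add_sq_complex]
    ring
  have hint2 : IntervalIntegrable
      (fun θ => 2 * (conj (a N) * (e θ * hfun a (N+1) (e θ))).re) volume 0 (2*π) := by
    apply Continuous.intervalIntegrable
    exact continuous_const.mul (Complex.continuous_re.comp (continuous_const.mul hc3))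
  have hint3 : IntervalIntegrable
      (fun θ => ‖e θ * hfun a (N+1) (e θ)‖ ^ 2) volume 0 (2*π) :=
    ((hc3.norm).pow 2).intervalIntegrable _ _
  have hII : II φ a r N = ∫ θ in (0:ℝ)..(2*π), (‖a N‖ ^ 2
      + (2 * (conj (a N) * (e θ * hfun a (N+1) (e θ))).re
        + ‖e θ * hfun a (N+1) (e θ)‖ ^ 2)) := by
    unfold II
    exact intervalIntegral.integral_congr fun θ _ => hpt θ
  rw [hII, intervalIntegral.integral_add (intervalIntegrable_const) (hint2.add hint3),
    intervalIntegral.integral_add hint2 hint3]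
  have e1 : ∫ _ in (0:ℝ)..(2*π), ‖a N‖ ^ 2 = 2 * π * ‖a N‖ ^ 2 := by
    rw [intervalIntegral.integral_const, smul_eq_mul]
    ring
  have e2 : ∫ θ in (0:ℝ)..(2*π), 2 * (conj (a N) * (e θ * hfun a (N+1) (e θ))).re = 0 := by
    have hL : ∀ w : ℂ, (Complex.reCLM.comp
        (((conj (a N)) • (ContinuousLinearMap.id ℂ ℂ)).restrictScalars ℝ)) w
        = (conj (a N) * w).re := fun w => rfl
    have hcint : IntervalIntegrable (fun θ => e θ * hfun a (N+1) (e θ)) volume 0 (2*π) :=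
      hc3.intervalIntegrable _ _
    calc ∫ θ in (0:ℝ)..(2*π), 2 * (conj (a N) * (e θ * hfun a (N+1) (e θ))).re
        = 2 * ∫ θ in (0:ℝ)..(2*π), (Complex.reCLM.comp
            (((conj (a N)) • (ContinuousLinearMap.id ℂ ℂ)).restrictScalars ℝ))
            (e θ * hfun a (N+1) (e θ)) := by
          rw [intervalIntegral.integral_const_mul]
          rfl
      _ = 2 * (Complex.reCLM.comp
            (((conj (a N)) • (ContinuousLinearMap.id ℂ ℂ)).restrictScalars ℝ))
            (∫ θ in (0:ℝ)..(2*π), e θ * hfun a (N+1) (e θ)) := by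
          rw [ContinuousLinearMap.intervalIntegral_comp_comm _ hcint]
      _ = 0 := by
          rw [meanzero hφ hmap hzero ha h0 h1 (N+1)]
          simp
  have e3 : ∫ θ in (0:ℝ)..(2*π), ‖e θ * hfun a (N+1) (e θ)‖ ^ 2 ≤ II φ a r (N+1) := by
    unfold II
    apply intervalIntegral.integral_mono_on (by positivity) hint3
      (((contH hφ hmap ha h0 h1 (N+1)).norm.pow 2).intervalIntegrable _ _)
    intro θ _
    rw [norm_mul]
    have hb : ‖e θ‖ * ‖hfun a (N+1) (e θ)‖ ≤ 1 * ‖hfun a (N+1) (e θ)‖ :=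
      mul_le_mul_of_nonneg_right (hmem θ).le (norm_nonneg _)
    calc (‖e θ‖ * ‖hfun a (N+1) (e θ)‖) ^ 2 ≤ (1 * ‖hfun a (N+1) (e θ)‖) ^ 2 := by
          apply pow_le_pow_left₀ (by positivity) hb
      _ = ‖hfun a (N+1) (e θ)‖ ^ 2 := by ring
  rw [e1, e2]
  simpa using e3

include hφ hmap hzero ha h0 h1 in
lemma telescope (N : ℕ) :
    II φ a r 0 ≤ 2 * π * (∑ k ∈ Finset.range N, ‖a k‖ ^ 2) + II φ a r N := by
  induction N with
  | zero => simp
  | succ N ih =>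
    calc II φ a r 0 ≤ 2 * π * (∑ k ∈ Finset.range N, ‖a k‖ ^ 2) + II φ a r N := ih
      _ ≤ 2 * π * (∑ k ∈ Finset.range N, ‖a k‖ ^ 2)
          + (2 * π * ‖a N‖ ^ 2 + II φ a r (N+1)) := by
          have := step hφ hmap hzero ha h0 h1 N
          linarith
      _ = 2 * π * (∑ k ∈ Finset.range (N+1), ‖a k‖ ^ 2) + II φ a r (N+1) := by
          rw [Finset.sum_range_succ]
          ring

include hφ hmap ha h0 h1 in
lemma tailbound {ρ : ℝ} (hρ0 : 0 ≤ ρ) (hρ1 : ρ < 1)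
    (hρ : ∀ θ ∈ Icc (0:ℝ) (2*π), ‖φ (circleMap 0 r θ)‖ ≤ ρ) (N : ℕ) :
    II φ a r N ≤ (∑' n, ‖a (n + N)‖ ^ 2) * (1 - ρ^2)⁻¹ * (2 * π) := by
  set A := ∑' n, ‖a (n + N)‖ ^ 2 with hA
  have hA0 : 0 ≤ A := tsum_nonneg fun n => sq_nonneg _
  have hB0 : (0:ℝ) ≤ (1 - ρ^2)⁻¹ := by
    have : (0:ℝ) < 1 - ρ^2 := by nlinarith
    positivity
  have hpt : ∀ θ ∈ Set.uIoc (0:ℝ) (2*π), ‖(‖hfun a N (φ (circleMap 0 r θ))‖ ^ 2 : ℝ)‖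
      ≤ A * (1 - ρ^2)⁻¹ := by
    intro θ hθ
    have hθ' : θ ∈ Icc (0:ℝ) (2*π) := by
      rw [Set.uIoc_of_le (by positivity)] at hθ
      exact Ioc_subset_Icc_self hθ
    have hz1 : ‖φ (circleMap 0 r θ)‖ < 1 := by
      have := hφmem hmap h0 h1 θ
      rwa [mem_ball, dist_zero_right] at this
    set z := φ (circleMap 0 r θ) with hzdef
    have hzρ : ‖z‖ ≤ ρ := hρ θ hθ'
    have hstep1 : ‖hfun a N z‖ ≤ ∑' n, ‖a (n + N)‖ * ‖z‖ ^ n := by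
      unfold hfun
      have hsn : Summable fun n => ‖a (n + N) * z ^ n‖ := by
        apply Summable.congr (summable_norm_mul_pow (ha_tail ha N) (norm_nonneg z) hz1)
        intro n
        rw [norm_mul, norm_pow]
      refine (norm_tsum_le_tsum_norm hsn).trans (le_of_eq ?_)
      apply tsum_congr fun n => ?_
      rw [norm_mul, norm_pow]
    have hstep2 : (∑' n, ‖a (n + N)‖ * ‖z‖ ^ n) ≤ ∑' n, ‖a (n + N)‖ * ρ ^ n := by
      apply Summable.tsum_le_tsum _ (summable_norm_mul_pow (ha_tail ha N) (norm_nonneg z) hz1)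
        (summable_norm_mul_pow (ha_tail ha N) hρ0 hρ1)
      intro n
      apply mul_le_mul_of_nonneg_left _ (norm_nonneg _)
      exact pow_le_pow_left₀ (norm_nonneg z) hzρ n
    have hstep3 := tsum_norm_mul_pow_le (ha_tail ha N) hρ0 hρ1
    have hC : ‖hfun a N z‖ ≤ Real.sqrt A * Real.sqrt (1 - ρ^2)⁻¹ :=
      (hstep1.trans hstep2).trans hstep3
    have hsq : ‖hfun a N z‖ ^ 2 ≤ (Real.sqrt A * Real.sqrt (1 - ρ^2)⁻¹) ^ 2 :=
      pow_le_pow_left₀ (norm_nonneg _) hC 2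
    have hval : (Real.sqrt A * Real.sqrt (1 - ρ^2)⁻¹) ^ 2 = A * (1 - ρ^2)⁻¹ := by
      rw [mul_pow, Real.sq_sqrt hA0, Real.sq_sqrt hB0]
    rw [Real.norm_eq_abs, _root_.abs_of_nonneg (by positivity)]
    rw [hval] at hsq
    exact hsq
  have := intervalIntegral.norm_integral_le_of_norm_le_const hpt
  unfold II
  have hle : (∫ θ in (0:ℝ)..(2*π), ‖hfun a N (φ (circleMap 0 r θ))‖ ^ 2)
      ≤ ‖∫ θ in (0:ℝ)..(2*π), ‖hfun a N (φ (circleMap 0 r θ))‖ ^ 2‖ := le_abs_self _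
  refine hle.trans (this.trans (le_of_eq ?_))
  rw [sub_zero, _root_.abs_of_nonneg (by positivity)]

end sub

lemma summable_sq_pow {c : ℕ → ℂ} (hc : Summable fun n => ‖c n‖ ^ 2)
    {r : ℝ} (h0 : 0 ≤ r) (h1 : r < 1) :
    Summable fun n => ‖c n‖ ^ 2 * r ^ (2 * n) := by
  apply Summable.of_nonneg_of_le (fun n => by positivity) (fun n => ?_) hc
  calc ‖c n‖ ^ 2 * r ^ (2 * n) ≤ ‖c n‖ ^ 2 * 1 :=
        mul_le_mul_of_nonneg_left (pow_le_one₀ h0 h1.le) (by positivity)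
    _ = ‖c n‖ ^ 2 := mul_one _

lemma littlewood_r {φ : ℂ → ℂ} (hφ : DifferentiableOn ℂ φ (ball (0:ℂ) 1))
    (hmap : MapsTo φ (ball (0:ℂ) 1) (ball (0:ℂ) 1)) (hzero : φ 0 = 0)
    {a c : ℕ → ℂ} (ha : Summable fun n => ‖a n‖ ^ 2) (hc : Summable fun n => ‖c n‖ ^ 2)
    (heq : ∀ z ∈ ball (0:ℂ) 1, (∑' n, c n * z ^ n) = ∑' n, a n * (φ z) ^ n)
    {r : ℝ} (h0 : 0 < r) (h1 : r < 1) :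
    (∑' n, ‖c n‖ ^ 2 * r ^ (2 * n)) ≤ ∑' n, ‖a n‖ ^ 2 := by
  obtain ⟨θ₀, hθ₀mem, hθ₀⟩ := (isCompact_Icc (a := (0:ℝ)) (b := 2*π)).exists_isMaxOn
    (nonempty_Icc.2 (by positivity)) ((hφcont hφ hmap h0 h1).norm.continuousOn)
  set ρ := ‖φ (circleMap 0 r θ₀)‖ with hρdef
  have hρ0 : 0 ≤ ρ := norm_nonneg _
  have hρ1 : ρ < 1 := by
    have := hφmem hmap h0 h1 θ₀
    rwa [mem_ball, dist_zero_right] at this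
  have hρ : ∀ θ ∈ Icc (0:ℝ) (2*π), ‖φ (circleMap 0 r θ)‖ ≤ ρ := fun θ hθ => hθ₀ hθ
  have hI0 : 2 * π * (∑' n, ‖c n‖ ^ 2 * r ^ (2*n)) = II φ a r 0 := by
    rw [← integral_norm_sq hc h0.le h1]
    unfold II
    apply intervalIntegral.integral_congr
    intro θ _
    have h₁ : circleMap 0 r θ ∈ ball (0:ℂ) 1 := hcirc h0 h1 θ
    have h₂ : (∑' n, a n * (φ (circleMap 0 r θ)) ^ n)
        = hfun a 0 (φ (circleMap 0 r θ)) := by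
      unfold hfun
      exact tsum_congr fun n => by rw [Nat.add_zero]
    show ‖∑' n, c n * (circleMap 0 r θ) ^ n‖ ^ 2 = ‖hfun a 0 (φ (circleMap 0 r θ))‖ ^ 2
    rw [heq _ h₁, h₂]
  have htail : Tendsto (fun N => (∑' n, ‖a (n + N)‖ ^ 2)) atTop (𝓝 0) :=
    tendsto_sum_nat_add (f := fun n => ‖a n‖ ^ 2)
  have hsum : Tendsto (fun N => ∑ k ∈ Finset.range N, ‖a k‖ ^ 2) atTop
      (𝓝 (∑' n, ‖a n‖ ^ 2)) := ha.hasSum.tendsto_sum_nat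
  have hbound : ∀ N, II φ a r 0 ≤ 2 * π * (∑ k ∈ Finset.range N, ‖a k‖ ^ 2)
      + (∑' n, ‖a (n + N)‖ ^ 2) * (1 - ρ^2)⁻¹ * (2 * π) := by
    intro N
    have h3 := telescope hφ hmap hzero ha h0 h1 N
    have h4 := tailbound hφ hmap ha h0 h1 hρ0 hρ1 hρ N
    linarith
  have hlim : Tendsto (fun N => 2 * π * (∑ k ∈ Finset.range N, ‖a k‖ ^ 2)
      + (∑' n, ‖a (n + N)‖ ^ 2) * (1 - ρ^2)⁻¹ * (2 * π)) atTop
      (𝓝 (2 * π * (∑' n, ‖a n‖ ^ 2) + 0 * (1 - ρ^2)⁻¹ * (2 * π))) :=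
    (hsum.const_mul _).add ((htail.mul_const _).mul_const _)
  have hfin : II φ a r 0 ≤ 2 * π * (∑' n, ‖a n‖ ^ 2) + 0 * (1 - ρ^2)⁻¹ * (2 * π) :=
    ge_of_tendsto' hlim hbound
  rw [← hI0] at hfin
  nlinarith [Real.pi_pos]

lemma littlewood {φ : ℂ → ℂ} (hφ : DifferentiableOn ℂ φ (ball (0:ℂ) 1))
    (hmap : MapsTo φ (ball (0:ℂ) 1) (ball (0:ℂ) 1)) (hzero : φ 0 = 0)
    {a c : ℕ → ℂ} (ha : Summable fun n => ‖a n‖ ^ 2) (hc : Summable fun n => ‖c n‖ ^ 2)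
    (heq : ∀ z ∈ ball (0:ℂ) 1, (∑' n, c n * z ^ n) = ∑' n, a n * (φ z) ^ n) :
    (∑' n, ‖c n‖ ^ 2) ≤ ∑' n, ‖a n‖ ^ 2 := by
  have key : ∀ s : Finset ℕ, ∑ n ∈ s, ‖c n‖ ^ 2 ≤ ∑' n, ‖a n‖ ^ 2 := by
    intro s
    obtain ⟨N, hN⟩ : ∃ N, s ⊆ Finset.range N :=
      ⟨(s.sup id) + 1, fun x hx => Finset.mem_range.2
        (Nat.lt_succ_of_le (Finset.le_sup (f := id) hx))⟩
    have hstep : ∑ n ∈ s, ‖c n‖ ^ 2 ≤ ∑ n ∈ Finset.range N, ‖c n‖ ^ 2 :=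
      Finset.sum_le_sum_of_subset_of_nonneg hN (fun i _ _ => sq_nonneg _)
    refine hstep.trans ?_
    have hrj : ∀ j : ℕ, (0:ℝ) < 1 - ((j:ℝ)+2)⁻¹ ∧ 1 - ((j:ℝ)+2)⁻¹ < 1 := by
      intro j
      have hj0 : (0:ℝ) ≤ (j:ℝ) := Nat.cast_nonneg j
      constructor
      · have h5 : ((j:ℝ)+2)⁻¹ ≤ 2⁻¹ := by
          apply inv_anti₀ (by norm_num)
          linarith
        linarith
      · have : (0:ℝ) < ((j:ℝ)+2)⁻¹ := by positivity
        linarith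
    have hrlim : Tendsto (fun j : ℕ => (1 - ((j:ℝ)+2)⁻¹)) atTop (𝓝 1) := by
      have h6 : Tendsto (fun j : ℕ => ((j:ℝ)+2)⁻¹) atTop (𝓝 0) := by
        apply Tendsto.inv_tendsto_atTop
        exact tendsto_atTop_add_const_right _ 2 tendsto_natCast_atTop_atTop
      simpa using (tendsto_const_nhds (x := (1:ℝ))).sub h6
    have hterm : Tendsto
        (fun j : ℕ => ∑ n ∈ Finset.range N, ‖c n‖ ^ 2 * (1 - ((j:ℝ)+2)⁻¹) ^ (2*n))
        atTop (𝓝 (∑ n ∈ Finset.range N, ‖c n‖ ^ 2 * 1)) := by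
      apply tendsto_finset_sum
      intro n _
      have h7 := (hrlim.pow (2*n)).const_mul (‖c n‖ ^ 2)
      simpa using h7
    have hle : ∀ j : ℕ, ∑ n ∈ Finset.range N, ‖c n‖ ^ 2 * (1 - ((j:ℝ)+2)⁻¹) ^ (2*n)
        ≤ ∑' n, ‖a n‖ ^ 2 := by
      intro j
      have h8 := littlewood_r hφ hmap hzero ha hc heq (hrj j).1 (hrj j).2
      refine le_trans ?_ h8
      exact Summable.sum_le_tsum _ (fun n _ => mul_nonneg (sq_nonneg _) (pow_nonneg (hrj j).1.le _))
        (summable_sq_pow hc (hrj j).1.le (hrj j).2)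
    have h9 := le_of_tendsto hterm (Filter.Eventually.of_forall hle)
    simpa using h9
  exact Summable.tsum_le_of_sum_le hc key


lemma sq_summable (x : ℓ2) : Summable fun n => ‖x n‖ ^ 2 := by
  have h := (lp.memℓp x).summable (p := 2) (by norm_num)
  refine h.congr fun n => ?_
  rw [show ((2 : ENNReal)).toReal = ((2 : ℕ) : ℝ) by norm_num, Real.rpow_natCast]

lemma aCoef_summable (f : Hh) : Summable fun n => ‖aCoef f n‖ ^ 2 := sq_summable _

lemma bCoef_summable (f : Hh) : Summable fun n => ‖bCoef f n‖ ^ 2 := by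
  have h := sq_summable ((WithLp.equiv 2 (ℓ2 × ℓ2) f).2)
  refine h.congr fun n => ?_
  rw [bCoef, RCLike.norm_conj]

lemma norm_Hh_sq (f : Hh) :
    ‖f‖ ^ 2 = (∑' n, ‖aCoef f n‖ ^ 2) + (∑' n, ‖bCoef f n‖ ^ 2) := by
  rw [WithLp.prod_norm_sq_eq_of_L2]
  congr 1
  · have := lp.norm_rpow_eq_tsum (p := 2) (by norm_num) f.fst
    rw [show ((2 : ENNReal)).toReal = ((2 : ℕ) : ℝ) by norm_num] at this
    simp only [Real.rpow_natCast] at this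
    rw [this]
    exact tsum_congr fun n => rfl
  · have := lp.norm_rpow_eq_tsum (p := 2) (by norm_num) f.snd
    rw [show ((2 : ENNReal)).toReal = ((2 : ℕ) : ℝ) by norm_num] at this
    simp only [Real.rpow_natCast] at this
    rw [this]
    exact tsum_congr fun n => by rw [bCoef, RCLike.norm_conj]; rfl


end Stmt14

/-- If `φ` is an analytic self-map of the unit disc with `φ(0) = 0`, then the
composition operator `C_φ` on `H²ₕ(𝔻)` satisfies `1 ≤ ‖C_φ‖ ≤ 4`. -/
theorem stmt_14 (φ : ℂ → ℂ) (hφ : DifferentiableOn ℂ φ (ball (0 : ℂ) 1))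
    (hmap : MapsTo φ (ball (0 : ℂ) 1) (ball (0 : ℂ) 1)) (h0 : φ 0 = 0)
    (T : Hh →L[ℂ] Hh) (hT : ∀ f : Hh, Represents φ f (T f)) :
    1 ≤ ‖T‖ ∧ ‖T‖ ≤ 4 := by
  constructor
  · -- lower bound via constant function
    set f₀ : Hh := (WithLp.equiv 2 (ℓ2 × ℓ2)).symm (lp.single 2 0 1, 0) with hf₀
    have haf₀ : ∀ n, aCoef f₀ n = if n = 0 then 1 else 0 := by
      intro n
      rw [aCoef, hf₀]
      simp only [Equiv.apply_symm_apply]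
      by_cases h : n = 0
      · subst h; simp [lp.single_apply_self]
      · simp [lp.single_apply_ne 2 0 1 h, h]
    have hbf₀ : ∀ n, bCoef f₀ n = 0 := by
      intro n
      rw [bCoef, hf₀]
      simp
    -- ‖f₀‖ = 1
    have hnf₀ : ‖f₀‖ = 1 := by
      have hsq : ‖f₀‖ ^ 2 = 1 := by
        rw [Stmt14.norm_Hh_sq]
        have h1 : (∑' n, ‖aCoef f₀ n‖ ^ 2) = 1 := by
          rw [tsum_eq_single 0 (fun n hn => by rw [haf₀ n, if_neg hn]; simp)]
          rw [haf₀ 0, if_pos rfl]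
          simp
        have h2 : (∑' n, ‖bCoef f₀ n‖ ^ 2) = 0 := by
          simp only [hbf₀]
          simp
        rw [h1, h2, add_zero]
      calc ‖f₀‖ = Real.sqrt (‖f₀‖ ^ 2) := (Real.sqrt_sq (norm_nonneg _)).symm
        _ = 1 := by rw [hsq, Real.sqrt_one]
    -- aCoef (T f₀) 0 = 1
    have hmem0 : (0 : ℂ) ∈ ball (0 : ℂ) 1 := mem_ball_self one_pos
    have hkey := (hT f₀ 0 hmem0).1
    have hL : (∑' n : ℕ, aCoef (T f₀) n * (0:ℂ) ^ n) = aCoef (T f₀) 0 := by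
      rw [tsum_eq_single 0 (fun n hn => by rw [zero_pow hn, mul_zero])]
      simp
    have hR : (∑' n : ℕ, aCoef f₀ n * (φ 0) ^ n) = 1 := by
      rw [h0, tsum_eq_single 0 (fun n hn => by rw [zero_pow hn, mul_zero])]
      rw [haf₀ 0, if_pos rfl]
      simp
    have hc0 : aCoef (T f₀) 0 = 1 := by rw [← hL, hkey, hR]
    -- ‖T f₀‖ ≥ 1
    have hTf₀ : 1 ≤ ‖T f₀‖ := by
      have hsq : 1 ≤ ‖T f₀‖ ^ 2 := by
        rw [Stmt14.norm_Hh_sq]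
        have h1 : (1:ℝ) ≤ ∑' n, ‖aCoef (T f₀) n‖ ^ 2 := by
          have := Summable.le_tsum (Stmt14.aCoef_summable (T f₀)) 0
            (fun n _ => sq_nonneg _)
          rw [hc0] at this
          simpa using this
        have h2 : (0:ℝ) ≤ ∑' n, ‖bCoef (T f₀) n‖ ^ 2 :=
          tsum_nonneg fun n => sq_nonneg _
        linarith
      nlinarith [norm_nonneg (T f₀)]
    have := T.le_opNorm f₀
    rw [hnf₀, mul_one] at this
    linarith
  · -- upper bound via Littlewood
    apply ContinuousLinearMap.opNorm_le_bound T (by norm_num)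
    intro f
    have ha := Stmt14.littlewood hφ hmap h0 (Stmt14.aCoef_summable f)
      (Stmt14.aCoef_summable (T f)) (fun z hz => (hT f z hz).1)
    have hb := Stmt14.littlewood hφ hmap h0 (Stmt14.bCoef_summable f)
      (Stmt14.bCoef_summable (T f)) (fun z hz => (hT f z hz).2)
    have h1 : ‖T f‖ ^ 2 ≤ ‖f‖ ^ 2 := by
      rw [Stmt14.norm_Hh_sq, Stmt14.norm_Hh_sq]
      linarith
    have h2 : ‖T f‖ ≤ ‖f‖ := by
      nlinarith [norm_nonneg (T f), norm_nonneg f]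
    have := norm_nonneg f
    linarith
end
end
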